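/- For any ℚ-basis of V, the determinant of the Gram matrix of the bilinear form tr∘Φ with respect to that basis equals N_{E₀/ℚ}(−θ²)^m · q² for some nonzero rational number q, where N_{E₀/ℚ} denotes the field norm of E₀ over ℚ. -/

import Mathlib

open Module

universe u

lemma norm_neg_aux (K L : Type*) [Field K] [Field L] [Algebra K L] [FiniteDimensional K L] (x : L) :
    Algebra.norm K (-x) = (-1)^(Module.finrank K L) * Algebra.norm K x := by
  have h1 : (-x) = (-1) * x := by ring
  rw [h1, map_mul]
  congr 1
  rw [Algebra.norm_eq_matrix_det (Module.finBasis K L), map_neg, map_one, Matrix.det_neg,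
    Matrix.det_one, Fintype.card_fin, mul_one]

lemma herm_orth {K : Type*} [Field K] (ι : K →+* K) (t : K) (ht : t ≠ 0) (hιt : ι t = -t)
    (h2 : (2 : K) ≠ 0) :
    ∀ (m : ℕ) (V : Type u) [AddCommGroup V] [Module K V] [FiniteDimensional K V],
      Module.finrank K V = m →
      ∀ Φ : V → V → K,
        (∀ x x' y, Φ (x + x') y = Φ x y + Φ x' y) →
        (∀ (e : K) (x y : V), Φ (e • x) y = e * Φ x y) →
        (∀ x y y', Φ x (y + y') = Φ x y + Φ x y') →
        (∀ (e : K) (x y : V), Φ x (e • y) = ι e * Φ x y) →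
        (∀ x y, Φ y x = ι (Φ x y)) →
        (∀ x, (∀ y, Φ x y = 0) → x = 0) →
        ∃ v : Basis (Fin m) K V, ∀ i j, i ≠ j → Φ (v i) (v j) = 0 := by
  intro m
  induction m with
  | zero =>
      intro V _ _ _ hrk Φ _ _ _ _ _ _
      have : Subsingleton V := finrank_zero_iff.mp hrk
      exact ⟨Basis.empty V, fun i j _ => absurd i.2 (by omega)⟩
  | succ n ih =>
      intro V _ _ _ hrk Φ hadd1 hsmul1 hadd2 hsmul2 hherm hnd
      have hnt : Nontrivial V := by
        apply Module.nontrivial_of_finrank_pos (R := K); omega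
      -- find an anisotropic vector
      have hx : ∃ x : V, Φ x x ≠ 0 := by
        by_contra h
        push_neg at h
        have hzero : ∀ x y : V, Φ x y = 0 := by
          intro x y
          have e1 : Φ x y + ι (Φ x y) = 0 := by
            have := h (x + y)
            rw [hadd1, hadd2, hadd2, h x, h y, hherm x y] at this
            linear_combination this
          have e2 : t * (ι (Φ x y) - Φ x y) = 0 := by
            have := h (x + t • y)
            rw [hadd1, hadd2, hadd2, h x, hsmul1, hsmul2, hsmul1, hsmul2, h y, hherm x y,
              hιt] at this
            ring_nf at this ⊢
            linear_combination this
          have e3 : ι (Φ x y) = Φ x y := by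
            rcases mul_eq_zero.mp e2 with h' | h'
            · exact absurd h' ht
            · exact sub_eq_zero.mp h'
          rw [e3] at e1
          have : (2 : K) * Φ x y = 0 := by ring_nf; linear_combination e1
          rcases mul_eq_zero.mp this with h' | h'
          · exact absurd h' h2
          · exact h'
        obtain ⟨x, y, hxy⟩ := hnt
        exact hxy ((hnd x (hzero x)).trans (hnd y (hzero y)).symm)
      obtain ⟨x, hxx⟩ := hx
      -- the orthogonal complement of x
      let φ : V →ₗ[K] K :=
        { toFun := fun y => Φ y x
          map_add' := fun a b => hadd1 a b x
          map_smul' := fun c a => hsmul1 c a x }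
      let W := LinearMap.ker φ
      have hφx : φ x = Φ x x := rfl
      have hxW : x ∉ W := by
        intro hmem
        exact hxx (by simpa [φ] using (LinearMap.mem_ker.mp hmem))
      have hsurj : Function.Surjective φ := by
        intro c
        refine ⟨(c / Φ x x) • x, ?_⟩
        simp only [map_smul, hφx, smul_eq_mul]
        field_simp
      have hrkW : finrank K W = n := by
        have h1 := LinearMap.finrank_range_add_finrank_ker φ
        have h2' : LinearMap.range φ = ⊤ := LinearMap.range_eq_top.mpr hsurj
        rw [h2', finrank_top, finrank_self, hrk] at h1
        simp only [W]
        omega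
      -- decomposition: every z is multiple of x plus element of W
      have hdecomp : ∀ z : V, z - (Φ z x / Φ x x) • x ∈ W := by
        intro z
        simp only [W, LinearMap.mem_ker, map_sub, map_smul, hφx, smul_eq_mul]
        have : φ z = Φ z x := rfl
        rw [this]
        field_simp
        ring
      -- restricted form on W
      obtain ⟨w, hw⟩ := ih W hrkW (fun a b => Φ a b)
        (fun a b c => hadd1 a b c) (fun c a b => hsmul1 c a b)
        (fun a b c => hadd2 a b c) (fun c a b => hsmul2 c a b)
        (fun a b => hherm a b)
        (by
          intro a ha
          have haz : ∀ z : V, Φ (a : V) z = 0 := by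
            intro z
            have hw' : Φ (a : V) (z - (Φ z x / Φ x x) • x) = 0 := ha ⟨_, hdecomp z⟩
            have hax : Φ (a : V) x = 0 := by
              have := LinearMap.mem_ker.mp a.2
              have h1 := hherm (a : V) x
              rw [show φ (a : V) = Φ (a : V) x from rfl] at this
              exact this
            have : Φ (a:V) z = Φ (a:V) (z - (Φ z x / Φ x x) • x) + ι (Φ z x / Φ x x) * Φ (a:V) x := by
              rw [← hsmul2]
              rw [← hadd2]
              congr 1
              abel
            rw [this, hw', hax, mul_zero, add_zero]
          exact Subtype.ext (hnd _ haz))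
      -- assemble basis
      set v' : Fin (n + 1) → V := Fin.cons x (fun i => (w i : V)) with hv'
      have hWmem : ∀ i, ((w i : V)) ∈ W := fun i => (w i).2
      have hli : LinearIndependent K v' := by
        rw [hv', linearIndependent_fin_cons]
        constructor
        · exact w.linearIndependent.map' W.subtype (Submodule.ker_subtype W)
        · intro hmem
          apply hxW
          have hsub : Submodule.span K (Set.range fun i => ((w i : V))) ≤ W := by
            rw [Submodule.span_le]
            rintro _ ⟨i, rfl⟩
            exact hWmem i
          exact hsub hmem
      have hcard : Fintype.card (Fin (n + 1)) = finrank K V := by simp [hrk]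
      let v := basisOfLinearIndependentOfCardEqFinrank hli hcard
      have hv : ⇑v = v' := coe_basisOfLinearIndependentOfCardEqFinrank hli hcard
      refine ⟨v, ?_⟩
      intro i j hij
      rw [hv]
      have horthx : ∀ i, Φ ((w i : V)) x = 0 := by
        intro i
        exact LinearMap.mem_ker.mp (hWmem i)
      rcases Fin.eq_zero_or_eq_succ i with rfl | ⟨i', rfl⟩ <;>
        rcases Fin.eq_zero_or_eq_succ j with rfl | ⟨j', rfl⟩
      · exact absurd rfl hij
      · simp only [hv', Fin.cons_zero, Fin.cons_succ]
        rw [hherm, horthx j', map_zero]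
      · simp only [hv', Fin.cons_zero, Fin.cons_succ]
        exact horthx i'
      · simp only [hv', Fin.cons_succ]
        exact hw i' j' (by simpa using hij)


/-- `E = E₀(θ)` a CM field with CM involution `ι`, `Φ` a nondegenerate
hermitian sesquilinear form on the `m`-dimensional `E`-vector space `V`.  For any
`ℚ`-basis of `V`, the determinant of the Gram matrix of `tr∘Φ` equals
`N_{E₀/ℚ}(−θ²)^m · q²` for some nonzero rational `q`. -/
theorem stmt9 (E₀ E V : Type*) [Field E₀] [NumberField E₀] [Field E] [NumberField E]
    [Algebra E₀ E] [IsScalarTower ℚ E₀ E]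
    (htotreal : ∀ (σ : E₀ →+* ℂ) (x : E₀), (σ x).im = 0)
    (s : ℕ) (hs : Module.finrank ℚ E₀ = s)
    (θ : E) (hθ : θ ∉ Set.range (algebraMap E₀ E))
    (θ0 : E₀) (hθ0 : algebraMap E₀ E θ0 = θ ^ 2)
    (hθ0neg : ∀ σ : E₀ →+* ℝ, σ θ0 < 0)
    (hgen : ∀ x : E, ∃ a b : E₀, x = algebraMap E₀ E a + algebraMap E₀ E b * θ)
    (ι : E →+* E) (hιfix : ∀ a : E₀, ι (algebraMap E₀ E a) = algebraMap E₀ E a)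
    (hιθ : ι θ = -θ)
    [AddCommGroup V] [Module E V] [Module ℚ V] [IsScalarTower ℚ E V]
    [FiniteDimensional E V] (m : ℕ) (hm : Module.finrank E V = m)
    (Φ : V → V → E)
    (hΦadd1 : ∀ x x' y, Φ (x + x') y = Φ x y + Φ x' y)
    (hΦsmul1 : ∀ (e : E) (x y : V), Φ (e • x) y = e * Φ x y)
    (hΦadd2 : ∀ x y y', Φ x (y + y') = Φ x y + Φ x y')
    (hΦsmul2 : ∀ (e : E) (x y : V), Φ x (e • y) = ι e * Φ x y)
    (hΦherm : ∀ x y, Φ y x = ι (Φ x y))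
    (hΦnondeg : ∀ x, (∀ y, Φ x y = 0) → x = 0)
    (κ : Type) [Fintype κ] [DecidableEq κ] (b : Basis κ ℚ V) :
    ∃ q : ℚ, q ≠ 0 ∧
      (Matrix.of fun i j : κ => Algebra.trace ℚ E (Φ (b i) (b j))).det =
        (Algebra.norm ℚ (-θ0)) ^ m * q ^ 2 := by
  classical
  have halginj : Function.Injective (algebraMap E₀ E) := (algebraMap E₀ E).injective
  have hθne : θ ≠ 0 := by
    rintro rfl
    exact hθ ⟨0, map_zero _⟩
  -- ι is an involution
  have hιι : ∀ x : E, ι (ι x) = x := by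
    intro x
    obtain ⟨a, c, rfl⟩ := hgen x
    simp [map_add, map_mul, hιfix, hιθ]
  -- ι as a ℚ-algebra equivalence
  have hιℚ : ∀ q : ℚ, ι (algebraMap ℚ E q) = algebraMap ℚ E q := by
    intro q
    rw [IsScalarTower.algebraMap_apply ℚ E₀ E, hιfix]
  let ιa : E ≃ₐ[ℚ] E :=
    { toFun := ι, invFun := ι, left_inv := hιι, right_inv := hιι,
      map_add' := map_add ι, map_mul' := map_mul ι, commutes' := hιℚ }
  have htrι : ∀ x : E, Algebra.trace ℚ E (ι x) = Algebra.trace ℚ E x := fun x =>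
    Algebra.trace_eq_of_algEquiv ιa x
  -- trace of antisymmetric elements is zero
  have htranti : ∀ x : E, ι x = -x → Algebra.trace ℚ E x = 0 := by
    intro x hx
    have h1 : Algebra.trace ℚ E x = - Algebra.trace ℚ E x := by
      conv_lhs => rw [← htrι x, hx, map_neg]
    linarith
  -- basis of E over E₀
  have hindep : LinearIndependent E₀ ![(1 : E), θ] := by
    rw [linearIndependent_fin2]
    refine ⟨by simpa using hθne, ?_⟩
    intro a ha
    apply hθ
    simp only [Matrix.cons_val_one, Matrix.head_cons, Matrix.cons_val_zero] at ha
    have ha' : algebraMap E₀ E a * θ = 1 := by rwa [Algebra.smul_def] at ha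
    have hane : a ≠ 0 := by
      rintro rfl; simp at ha'
    refine ⟨a⁻¹, ?_⟩
    rw [map_inv₀]
    exact inv_eq_of_mul_eq_one_right ha'
  have hspan : ⊤ ≤ Submodule.span E₀ (Set.range ![(1 : E), θ]) := by
    rintro x -
    obtain ⟨a, c, rfl⟩ := hgen x
    have : Set.range ![(1 : E), θ] = {(1 : E), θ} := by
      simp [Matrix.range_cons, Matrix.range_empty, Set.pair_comm]
    rw [this]
    rw [Submodule.mem_span_pair]
    exact ⟨a, c, by simp [Algebra.smul_def]⟩
  let bE : Basis (Fin 2) E₀ E := Basis.mk hindep hspan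
  have hbE0 : bE 0 = 1 := by simp [bE]
  have hbE1 : bE 1 = θ := by simp [bE]
  have hfinrankE : finrank E₀ E = 2 := by
    rw [finrank_eq_card_basis bE, Fintype.card_fin]
  have : FiniteDimensional E₀ E := Module.Finite.of_basis bE
  -- trace from E to Q of algebraMap elements
  have htralg : ∀ a : E₀, Algebra.trace ℚ E (algebraMap E₀ E a) = 2 * Algebra.trace ℚ E₀ a := by
    intro a
    rw [← Algebra.trace_trace (S := E₀), Algebra.trace_algebraMap, hfinrankE, map_nsmul,
      nsmul_eq_mul]
    norm_num
  -- trace of alg * θ is zero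
  have htrθ : ∀ a : E₀, Algebra.trace ℚ E (algebraMap E₀ E a * θ) = 0 := by
    intro a
    apply htranti
    rw [map_mul, hιfix, hιθ]
    ring
  -- fixed points of ι are in E₀
  have hfixed : ∀ x : E, ι x = x → ∃ a : E₀, algebraMap E₀ E a = x := by
    intro x hx
    obtain ⟨a, c, rfl⟩ := hgen x
    rw [map_add, map_mul, hιfix, hιfix, hιθ] at hx
    have : (2 : E) * (algebraMap E₀ E c * θ) = 0 := by linear_combination -hx
    rcases mul_eq_zero.mp this with h | h
    · norm_num at h
    rcases mul_eq_zero.mp h with h | h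
    · refine ⟨a, by rw [h]; ring⟩
    · exact absurd h hθne
  -- the bilinear form over ℚ
  let B : LinearMap.BilinForm ℚ V := LinearMap.mk₂ ℚ (fun x y => Algebra.trace ℚ E (Φ x y))
    (fun x x' y => by rw [hΦadd1, map_add])
    (fun q x y => by
      rw [← algebraMap_smul E q x, hΦsmul1, ← Algebra.smul_def, map_smul, smul_eq_mul])
    (fun x y y' => by rw [hΦadd2, map_add])
    (fun q x y => by
      rw [← algebraMap_smul E q y, hΦsmul2, hιℚ, ← Algebra.smul_def, map_smul, smul_eq_mul])
  have hBapply : ∀ x y : V, B x y = Algebra.trace ℚ E (Φ x y) := fun x y => rfl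
  -- bases
  set κ₀ := Module.Free.ChooseBasisIndex ℚ E₀ with hκ₀
  let e : Basis κ₀ ℚ E₀ := Module.Free.chooseBasis ℚ E₀
  let f : Basis (κ₀ × Fin 2) ℚ E := e.smulTower bE
  have h2E : (2 : E) ≠ 0 := two_ne_zero
  obtain ⟨v, hvorth⟩ := herm_orth ι θ hθne hιθ h2E m V hm Φ hΦadd1 hΦsmul1 hΦadd2 hΦsmul2
    hΦherm hΦnondeg
  -- diagonal entries
  have hvdiag : ∀ i, ∃ c : E₀, algebraMap E₀ E c = Φ (v i) (v i) := fun i =>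
    hfixed _ (hΦherm (v i) (v i)).symm
  choose c hc using hvdiag
  have hcne : ∀ i, c i ≠ 0 := by
    intro i hci
    have hdiag0 : Φ (v i) (v i) = 0 := by rw [← hc i, hci, map_zero]
    have hall : ∀ y, Φ (v i) y = 0 := by
      intro y
      let A : V →+ E := AddMonoidHom.mk' (fun y => Φ (v i) y) (hΦadd2 (v i))
      have hyrepr : (∑ k, v.repr y k • v k) = y := v.sum_repr y
      rw [← hyrepr]
      have hAs : Φ (v i) (∑ k, v.repr y k • v k) = ∑ k, Φ (v i) (v.repr y k • v k) :=
        map_sum A _ _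
      rw [hAs]
      apply Finset.sum_eq_zero
      intro k _
      rw [hΦsmul2]
      by_cases hk : k = i
      · subst hk; rw [hdiag0, mul_zero]
      · rw [hvorth i k (Ne.symm hk), mul_zero]
    exact v.ne_zero i (hΦnondeg _ hall)
  let bV : Basis ((κ₀ × Fin 2) × Fin m) ℚ V := f.smulTower v
  -- block matrices
  let N : E₀ → Matrix κ₀ κ₀ ℚ := fun a =>
    Matrix.of fun j l => Algebra.trace ℚ E₀ (e j * e l * a)
  let D : Fin m → Matrix (κ₀ × Fin 2) (κ₀ × Fin 2) ℚ := fun i =>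
    Matrix.blockDiagonal ![(2 : ℚ) • N (c i), (-2 : ℚ) • N (c i * θ0)]
  -- the Gram matrix w.r.t. bV is block diagonal
  have hGram : LinearMap.BilinForm.toMatrix bV B = Matrix.blockDiagonal D := by
    ext ⟨⟨j, ε⟩, i⟩ ⟨⟨l, δ⟩, k⟩
    rw [LinearMap.BilinForm.toMatrix_apply, Matrix.blockDiagonal_apply]
    have hbV1 : bV ((j, ε), i) = f (j, ε) • v i := by
      rw [show bV = f.smulTower v from rfl, Basis.smulTower_apply]
    have hbV2 : bV ((l, δ), k) = f (l, δ) • v k := by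
      rw [show bV = f.smulTower v from rfl, Basis.smulTower_apply]
    rw [hbV1, hbV2, hBapply, hΦsmul1, hΦsmul2]
    by_cases hik : i = k
    · subst hik
      rw [if_pos rfl, ← hc i]
      have hf1 : f (j, ε) = e j • bE ε := by
        rw [show f = e.smulTower bE from rfl, Basis.smulTower_apply]
      have hf2 : f (l, δ) = e l • bE δ := by
        rw [show f = e.smulTower bE from rfl, Basis.smulTower_apply]
      rw [hf1, hf2]
      rw [show D i = Matrix.blockDiagonal ![(2 : ℚ) • N (c i), (-2 : ℚ) • N (c i * θ0)] from rfl,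
        Matrix.blockDiagonal_apply]
      have hNv : ∀ (a : E₀) (j l : κ₀), N a j l = Algebra.trace ℚ E₀ (e j * e l * a) :=
        fun a j l => rfl
      fin_cases ε <;> fin_cases δ <;>
        simp only [Fin.mk_zero, Fin.mk_one, Fin.isValue, hbE0, hbE1,
          Matrix.cons_val_zero, Matrix.cons_val_one, Matrix.head_cons, Matrix.smul_apply,
          smul_eq_mul, reduceIte]
      · -- ε = 0, δ = 0
        rw [Algebra.smul_def, Algebra.smul_def, mul_one, mul_one, hιfix, ← map_mul (algebraMap E₀ E), ← map_mul (algebraMap E₀ E),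
          show e j * (e l * c i) = e j * e l * c i from by ring, htralg, hNv]
      · -- ε = 0, δ = 1
        rw [Algebra.smul_def, Algebra.smul_def, mul_one, map_mul ι, hιfix, hιθ,
          show (algebraMap E₀ E) (e j) * ((algebraMap E₀ E) (e l) * -θ * (algebraMap E₀ E) (c i))
            = -(algebraMap E₀ E (e j * e l * c i) * θ) from by rw [map_mul, map_mul]; ring,
          map_neg, htrθ, neg_zero]
        simp
      · -- ε = 1, δ = 0
        rw [Algebra.smul_def, Algebra.smul_def, mul_one, hιfix,
          show (algebraMap E₀ E) (e j) * θ * ((algebraMap E₀ E) (e l) * (algebraMap E₀ E) (c i))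
            = algebraMap E₀ E (e j * e l * c i) * θ from by rw [map_mul, map_mul]; ring,
          htrθ]
        simp
      · -- ε = 1, δ = 1
        rw [Algebra.smul_def, Algebra.smul_def, map_mul ι, hιfix, hιθ,
          show (algebraMap E₀ E) (e j) * θ * ((algebraMap E₀ E) (e l) * -θ * (algebraMap E₀ E) (c i))
            = -(algebraMap E₀ E (e j * e l * c i) * θ ^ 2) from by rw [map_mul, map_mul]; ring,
          ← hθ0,
          show algebraMap E₀ E (e j * e l * c i) * algebraMap E₀ E θ0
            = algebraMap E₀ E (e j * e l * (c i * θ0)) from by rw [← map_mul]; congr 1; ring,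
          map_neg, htralg, hNv]
        ring
    · rw [if_neg hik, hvorth i k hik, mul_zero, mul_zero, map_zero]
  -- determinant of N
  have hNmul : ∀ a : E₀, N a = N 1 * Algebra.leftMulMatrix e a := by
    intro a
    ext j l
    rw [Matrix.mul_apply]
    symm
    calc ∑ k, N 1 j k * Algebra.leftMulMatrix e a k l
        = ∑ k, Algebra.trace ℚ E₀ (e.repr (a * e l) k • (e j * e k)) := by
          apply Finset.sum_congr rfl
          intro k _
          rw [Algebra.leftMulMatrix_eq_repr_mul, map_smul,
            show N 1 j k = Algebra.trace ℚ E₀ (e j * e k * 1) from rfl, mul_one, smul_eq_mul]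
          ring
      _ = Algebra.trace ℚ E₀ (∑ k, e.repr (a * e l) k • (e j * e k)) := (map_sum _ _ _).symm
      _ = Algebra.trace ℚ E₀ (e j * ∑ k, e.repr (a * e l) k • e k) := by
          rw [Finset.mul_sum]
          congr 1
          exact Finset.sum_congr rfl fun k _ => (mul_smul_comm _ _ _).symm
      _ = Algebra.trace ℚ E₀ (e j * (a * e l)) := by rw [Basis.sum_repr]
      _ = N a j l := by
          rw [show N a j l = Algebra.trace ℚ E₀ (e j * e l * a) from rfl]
          ring_nf
  have hdetN : ∀ a : E₀, (N a).det = Algebra.norm ℚ a * (N 1).det := by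
    intro a
    rw [hNmul a, Matrix.det_mul, ← Algebra.norm_eq_matrix_det, mul_comm]
  have hdT : (N 1).det ≠ 0 := by
    have hN1 : N 1 = LinearMap.BilinForm.toMatrix e (Algebra.traceForm ℚ E₀) := by
      ext j l
      rw [LinearMap.BilinForm.toMatrix_apply, Algebra.traceForm_apply,
        show N 1 j l = Algebra.trace ℚ E₀ (e j * e l * 1) from rfl, mul_one]
    rw [hN1]
    exact (LinearMap.BilinForm.nondegenerate_iff_det_ne_zero e).mp
      (traceForm_nondegenerate ℚ E₀)
  -- cardinality
  set s₀ := Fintype.card κ₀ with hs₀def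
  have hs₀ : s₀ = finrank ℚ E₀ := (Module.finrank_eq_card_chooseBasisIndex ℚ E₀).symm
  have hnormθ0 : Algebra.norm ℚ θ0 = (-1 : ℚ) ^ s₀ * Algebra.norm ℚ (-θ0) := by
    rw [norm_neg_aux, ← hs₀, ← mul_assoc, ← mul_pow]
    norm_num
  -- determinant of the blocks
  let g : Fin m → ℚ := fun i => 2 ^ s₀ * Algebra.norm ℚ (c i) * (N 1).det
  have hgne : ∀ i, g i ≠ 0 := by
    intro i
    apply mul_ne_zero (mul_ne_zero (by positivity) _) hdT
    rw [Algebra.norm_ne_zero_iff]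
    exact hcne i
  have hdetD : ∀ i, (D i).det = Algebra.norm ℚ (-θ0) * g i ^ 2 := by
    intro i
    rw [show D i = Matrix.blockDiagonal ![(2 : ℚ) • N (c i), (-2 : ℚ) • N (c i * θ0)] from rfl,
      Matrix.det_blockDiagonal, Fin.prod_univ_two]
    simp only [Matrix.cons_val_zero, Matrix.cons_val_one, Matrix.head_cons]
    rw [Matrix.det_smul, Matrix.det_smul, hdetN (c i * θ0), hdetN (c i), map_mul, hnormθ0]
    have hneg2 : (-2 : ℚ) ^ s₀ = (-1 : ℚ) ^ s₀ * 2 ^ s₀ := by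
      rw [← mul_pow]; norm_num
    have hsq : (-1 : ℚ) ^ s₀ * (-1 : ℚ) ^ s₀ = 1 := by
      rw [← mul_pow]; norm_num
    rw [hneg2]
    show _ = Algebra.norm ℚ (-θ0) * (2 ^ s₀ * Algebra.norm ℚ (c i) * (N 1).det) ^ 2
    linear_combination (2 ^ s₀ * 2 ^ s₀ * Algebra.norm ℚ (c i) * Algebra.norm ℚ (c i) *
      (N 1).det * (N 1).det * Algebra.norm ℚ (-θ0)) * hsq
  -- change of basis to b
  have hdetBV : (LinearMap.BilinForm.toMatrix bV B).det =
      Algebra.norm ℚ (-θ0) ^ m * (∏ i, g i) ^ 2 := by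
    rw [hGram, Matrix.det_blockDiagonal]
    calc ∏ i, (D i).det = ∏ i, (Algebra.norm ℚ (-θ0) * g i ^ 2) :=
          Finset.prod_congr rfl fun i _ => hdetD i
      _ = Algebra.norm ℚ (-θ0) ^ m * (∏ i, g i) ^ 2 := by
          rw [Finset.prod_mul_distrib, Finset.prod_const, Finset.card_univ, Fintype.card_fin,
            Finset.prod_pow]
  let eqρ : ((κ₀ × Fin 2) × Fin m) ≃ κ := bV.indexEquiv b
  let bV' : Basis κ ℚ V := bV.reindex eqρ
  have hreindex : (LinearMap.BilinForm.toMatrix bV' B).det = (LinearMap.BilinForm.toMatrix bV B).det := by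
    have : LinearMap.BilinForm.toMatrix bV' B = (LinearMap.BilinForm.toMatrix bV B).submatrix eqρ.symm eqρ.symm := by
      ext i j
      rw [LinearMap.BilinForm.toMatrix_apply, Matrix.submatrix_apply, LinearMap.BilinForm.toMatrix_apply,
        Basis.reindex_apply, Basis.reindex_apply]
    rw [this, Matrix.det_submatrix_equiv_self]
  have hchg : (bV'.toMatrix ⇑b).transpose * LinearMap.BilinForm.toMatrix bV' B * bV'.toMatrix ⇑b =
      LinearMap.BilinForm.toMatrix b B := LinearMap.BilinForm.toMatrix_mul_basis_toMatrix bV' b B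
  have hdetP : (bV'.toMatrix ⇑b).det ≠ 0 := by
    letI := bV'.invertibleToMatrix b
    exact (Matrix.isUnit_det_of_invertible _).ne_zero
  have hgoalmat : (Matrix.of fun i j : κ => Algebra.trace ℚ E (Φ (b i) (b j))) =
      LinearMap.BilinForm.toMatrix b B := by
    ext i j
    rw [LinearMap.BilinForm.toMatrix_apply, hBapply]
    rfl
  refine ⟨(bV'.toMatrix ⇑b).det * ∏ i, g i, ?_, ?_⟩
  · exact mul_ne_zero hdetP (Finset.prod_ne_zero_iff.mpr fun i _ => hgne i)
  · rw [hgoalmat, ← hchg, Matrix.det_mul, Matrix.det_mul, Matrix.det_transpose, hreindex,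
      hdetBV]
    ring
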